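/- Let 𝒜 be a finite arrangement of hyperplanes H_{ij}^a = {x_i - x_j = a} (a > 0) in V = {x : Σx_i = 0}, G = G_𝒜 the associated oriented multigraph with multiplicity m_{ij} = #{a : H_{ij}^a ∈ 𝒜}, and for a point r in the complement of 𝒜 define λ_r(i) = #{H_{ij}^a ∈ 𝒜 : r_i - r_j > a}. Then λ_r is a G-parking function. -/

import Mathlib

open scoped Classical

/-- The Pak–Stanley label `λ_r` of a point `r` of the complement of an
arrangement of hyperplanes `x_i - x_j = a` (`a > 0`) is a `G_𝒜`-parking function. -/
theorem stmt4 (n : ℕ) (A : Finset (Fin n × Fin n × ℝ))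
    (hpos : ∀ h ∈ A, 0 < h.2.2)
    (r : Fin n → ℝ) (hV : ∑ i, r i = 0)
    (hcompl : ∀ h ∈ A, r h.1 - r h.2.1 ≠ h.2.2) :
    ∀ I : Finset (Fin n), I.Nonempty →
      ∃ i ∈ I, (A.filter (fun h => h.1 = i ∧ r h.1 - r h.2.1 > h.2.2)).card ≤
        ∑ j ∈ Iᶜ, (A.filter (fun h => h.1 = i ∧ h.2.1 = j)).card := by
  intro I hI
  obtain ⟨i, hiI, hmin⟩ := I.exists_min_image r hI
  refine ⟨i, hiI, ?_⟩
  set S : Finset (Fin n × Fin n × ℝ) :=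
    A.filter (fun h => h.1 = i ∧ h.2.1 ∉ I) with hS
  have hsum : ∑ j ∈ Iᶜ, (A.filter (fun h => h.1 = i ∧ h.2.1 = j)).card = S.card := by
    rw [Finset.card_eq_sum_card_fiberwise (f := fun h => h.2.1) (t := Iᶜ)
      (fun h hm => by simp only [hS, Finset.mem_coe, Finset.mem_filter] at hm; simpa using hm.2.2)]
    refine Finset.sum_congr rfl (fun j hj => ?_)
    congr 1
    ext h
    simp only [hS, Finset.mem_filter, Finset.mem_compl] at hj ⊢
    constructor
    · rintro ⟨hA, h1, h2⟩; exact ⟨⟨hA, h1, h2 ▸ hj⟩, h2⟩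
    · rintro ⟨⟨hA, h1, _⟩, h2⟩; exact ⟨hA, h1, h2⟩
  rw [hsum]
  apply Finset.card_le_card
  intro h hm
  simp only [Finset.mem_filter] at hm
  obtain ⟨hA, h1, h2⟩ := hm
  refine Finset.mem_filter.mpr ⟨hA, h1, fun hj => ?_⟩
  have := hmin h.2.1 hj
  have hp := hpos h hA
  rw [h1] at h2
  linarith
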